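/- The quotient ring ℂ[X,Y]/(3X²Y + Y⁶, X³ + 6XY⁵) is a finite-dimensional ℂ-vector space of dimension 18. -/

import Mathlib

open MvPolynomial

noncomputable section Z18Aux

abbrev P2 := MvPolynomial (Fin 2) ℂ

def Z18f : P2 := (3 : P2) * X 0 ^ 2 * X 1 + X 1 ^ 6
def Z18g : P2 := X 0 ^ 3 + 6 * X 0 * X 1 ^ 5
def Z18I : Ideal P2 := Ideal.span {Z18f, Z18g}

lemma hfI : Z18f ∈ Z18I := Ideal.subset_span (by simp)
lemma hgI : Z18g ∈ Z18I := Ideal.subset_span (by simp)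

def fs (a b : ℕ) : Fin 2 →₀ ℕ := Finsupp.single 0 a + Finsupp.single 1 b

lemma fs_apply0 (a b : ℕ) : fs a b 0 = a := by simp [fs]
lemma fs_apply1 (a b : ℕ) : fs a b 1 = b := by simp [fs]
lemma fs_eq (m : Fin 2 →₀ ℕ) : fs (m 0) (m 1) = m := by
  ext i
  fin_cases i
  · simp [fs]
  · simp [fs]

lemma monomial_fs (a b : ℕ) : monomial (fs a b) (1:ℂ) = X 0 ^ a * X 1 ^ b := by
  rw [X_pow_eq_monomial, X_pow_eq_monomial, monomial_mul, fs, one_mul]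

lemma monomial_eq_pow (m : Fin 2 →₀ ℕ) : monomial m (1:ℂ) = X 0 ^ (m 0) * X 1 ^ (m 1) := by
  conv_lhs => rw [← fs_eq m]
  exact monomial_fs _ _

def nf : ℕ → ℕ → (Fin 18 → ℂ)
  | 0, b => if h : b < 11 then Pi.single (⟨b, by omega⟩ : Fin 18) 1 else 0
  | 1, b => if h : b < 6 then Pi.single (⟨11+b, by omega⟩ : Fin 18) 1 else 0
  | 2, 0 => Pi.single (17 : Fin 18) 1
  | 2, b+1 => (-3 : ℂ)⁻¹ • nf 0 (b+6)
  | a+3, b => (-6 : ℂ) • nf (a+1) (b+5)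
  termination_by a _ => a

lemma nf_eq_zero : ∀ a b : ℕ, (11 ≤ b ∨ (1 ≤ a ∧ 6 ≤ b)) → nf a b = 0
  | 0, b, h => by rw [nf.eq_1, dif_neg (by omega)]
  | 1, b, h => by rw [nf.eq_2, dif_neg (by omega)]
  | 2, 0, h => by omega
  | 2, b+1, h => by rw [nf.eq_4, nf_eq_zero 0 (b+6) (by omega), smul_zero]
  | a+3, b, h => by rw [nf.eq_5, nf_eq_zero (a+1) (b+5) (by omega), smul_zero]
  termination_by a _ _ => a

lemma relA (a b : ℕ) : (3:ℂ) • nf (a+2) (b+1) + nf a (b+6) = 0 := by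
  match a with
  | 0 =>
    rw [show (0:ℕ)+2 = 2 from rfl, nf.eq_4, smul_smul]
    norm_num
  | a+1 =>
    rw [show a+1+2 = a+3 from rfl, nf.eq_5,
      nf_eq_zero (a+1) (b+1+5) (by omega)]
    simp

lemma relB (a b : ℕ) : nf (a+3) b + (6:ℂ) • nf (a+1) (b+5) = 0 := by
  rw [nf.eq_5]; module

def πl : P2 →ₗ[ℂ] (P2 ⧸ Z18I) := (Ideal.Quotient.mkₐ ℂ Z18I).toLinearMap

lemma πl_eq_zero {p : P2} (h : p ∈ Z18I) : πl p = 0 := by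
  show Ideal.Quotient.mkₐ ℂ Z18I p = 0
  rw [Ideal.Quotient.mkₐ_eq_mk, Ideal.Quotient.eq_zero_iff_mem]
  exact h

lemma smul_solve {V : Type*} [AddCommGroup V] [Module ℂ V] {c : ℂ} (hc : c ≠ 0)
    {u w : V} (h : c • u + w = 0) : u = (-c)⁻¹ • w := by
  have h1 : c • u = -w := eq_neg_of_add_eq_zero_left h
  have : u = c⁻¹ • (c • u) := by rw [smul_smul, inv_mul_cancel₀ hc, one_smul]
  rw [this, h1, smul_neg, ← neg_smul, ← inv_neg]

lemma smul_nat_eq (n : ℕ) [n.AtLeastTwo] (p : P2) :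
    (OfNat.ofNat n : ℂ) • p = (OfNat.ofNat n : P2) * p := by
  rw [smul_eq_C_mul, map_ofNat]

-- x^{a+3} y^b ≡ -6 • x^{a+1} y^{b+5}  mod I
lemma e3 (a b : ℕ) : πl (X 0 ^ (a+3) * X 1 ^ b) = (-6:ℂ) • πl (X 0 ^ (a+1) * X 1 ^ (b+5)) := by
  have hid : (X 0:P2) ^ (a+3) * X 1 ^ b + 6 * (X 0 ^ (a+1) * X 1 ^ (b+5))
      = (X 0 ^ a * X 1 ^ b) * Z18g := by rw [Z18g]; ring
  have hz : πl ((X 0:P2) ^ (a+3) * X 1 ^ b + 6 * (X 0 ^ (a+1) * X 1 ^ (b+5))) = 0 := by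
    rw [hid]; exact πl_eq_zero (Z18I.mul_mem_left _ hgI)
  rw [map_add, ← smul_nat_eq 6, map_smul] at hz
  rw [eq_neg_of_add_eq_zero_left hz, ← neg_smul]

-- x^2 y^{b+1} ≡ (-3)⁻¹ • y^{b+6}  mod I
lemma e2 (b : ℕ) : πl (X 0 ^ 2 * X 1 ^ (b+1)) = (-3:ℂ)⁻¹ • πl (X 1 ^ (b+6)) := by
  have hid : (3:P2) * (X 0 ^ 2 * X 1 ^ (b+1)) + X 1 ^ (b+6) = X 1 ^ b * Z18f := by
    rw [Z18f]; ring
  have hz : πl ((3:P2) * (X 0 ^ 2 * X 1 ^ (b+1)) + X 1 ^ (b+6)) = 0 := by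
    rw [hid]; exact πl_eq_zero (Z18I.mul_mem_left _ hfI)
  rw [map_add, ← smul_nat_eq 3, map_smul] at hz
  exact smul_solve (by norm_num) hz

-- x y^{b+6} ≡ 0 mod I
lemma e1 (b : ℕ) : πl (X 0 * X 1 ^ (b+6)) = 0 := by
  have hid : (17:P2) * ((X 0:P2) * X 1 ^ (b+6))
      = (3 * X 1 ^ (b+1)) * Z18g - (X 0 * X 1 ^ b) * Z18f := by
    rw [Z18f, Z18g]; ring
  have hz : πl ((17:P2) * ((X 0:P2) * X 1 ^ (b+6))) = 0 := by
    rw [hid, map_sub, πl_eq_zero (Z18I.mul_mem_left _ hgI),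
      πl_eq_zero (Z18I.mul_mem_left _ hfI), sub_zero]
  rw [← smul_nat_eq 17, map_smul] at hz
  have h17 : πl ((X 0:P2) * X 1 ^ (b+6)) = (17:ℂ)⁻¹ • ((17:ℂ) • πl ((X 0:P2) * X 1 ^ (b+6))) := by
    rw [smul_smul]; norm_num
  rw [h17, hz, smul_zero]

-- y^{b+11} ≡ 0 mod I
lemma e0 (b : ℕ) : πl ((X 1:P2) ^ (b+11)) = 0 := by
  have hid : (17:P2) * ((X 1:P2) ^ (b+11))
      = (17 * X 1 ^ (b+5) + 3 * X 0 ^ 2 * X 1 ^ b) * Z18f - (9 * X 0 * X 1 ^ (b+1)) * Z18g := by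
    rw [Z18f, Z18g]; ring
  have hz : πl ((17:P2) * ((X 1:P2) ^ (b+11))) = 0 := by
    rw [hid, map_sub, πl_eq_zero (Z18I.mul_mem_left _ hfI),
      πl_eq_zero (Z18I.mul_mem_left _ hgI), sub_zero]
  rw [← smul_nat_eq 17, map_smul] at hz
  have h17 : πl ((X 1:P2) ^ (b+11)) = (17:ℂ)⁻¹ • ((17:ℂ) • πl ((X 1:P2) ^ (b+11))) := by
    rw [smul_smul]; norm_num
  rw [h17, hz, smul_zero]

def stdMono (i : Fin 18) : P2 :=
  if (i:ℕ) < 11 then monomial (fs 0 i) 1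
  else if (i:ℕ) < 17 then monomial (fs 1 ((i:ℕ)-11)) 1
  else monomial (fs 2 0) 1

def Mmap : (Fin 18 → ℂ) →ₗ[ℂ] P2 := (Pi.basisFun ℂ (Fin 18)).constr ℂ stdMono

def Nmap : P2 →ₗ[ℂ] (Fin 18 → ℂ) :=
  (basisMonomials (Fin 2) ℂ).constr ℂ fun m => nf (m 0) (m 1)

lemma Mmap_single (i : Fin 18) : Mmap (Pi.single i 1) = stdMono i := by
  rw [← Pi.basisFun_apply, Mmap, Module.Basis.constr_basis]

lemma Nmap_monomial (m : Fin 2 →₀ ℕ) (c : ℂ) : Nmap (monomial m c) = c • nf (m 0) (m 1) := by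
  have h1 : monomial m c = c • monomial m (1:ℂ) := by rw [smul_monomial, smul_eq_mul, mul_one]
  have h2 : (basisMonomials (Fin 2) ℂ) m = monomial m 1 := by
    rw [coe_basisMonomials]
  rw [h1, map_smul]
  congr 1
  rw [← h2, Nmap, Module.Basis.constr_basis]

lemma Nmap_pow (a b : ℕ) : Nmap (X 0 ^ a * X 1 ^ b) = nf a b := by
  rw [← monomial_fs, Nmap_monomial, fs_apply0, fs_apply1, one_smul]

lemma Nmap_mul_f (p : P2) : Nmap (Z18f * p) = 0 := by
  have h : Nmap ∘ₗ (LinearMap.mulLeft ℂ Z18f) = 0 := by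
    apply (basisMonomials (Fin 2) ℂ).ext
    intro m
    have h2 : (basisMonomials (Fin 2) ℂ) m = monomial m 1 := by rw [coe_basisMonomials]
    rw [LinearMap.comp_apply, h2, LinearMap.mulLeft_apply, LinearMap.zero_apply]
    rw [monomial_eq_pow]
    have hid : Z18f * ((X 0:P2) ^ (m 0) * X 1 ^ (m 1))
        = 3 * (X 0 ^ (m 0 + 2) * X 1 ^ (m 1 + 1)) + X 0 ^ (m 0) * X 1 ^ (m 1 + 6) := by
      rw [Z18f]; ring
    rw [hid, map_add, ← smul_nat_eq 3, map_smul, Nmap_pow, Nmap_pow]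
    exact relA (m 0) (m 1)
  have := congrFun (congrArg (fun f => f.toFun) h) p
  simpa using this

lemma Nmap_mul_g (p : P2) : Nmap (Z18g * p) = 0 := by
  have h : Nmap ∘ₗ (LinearMap.mulLeft ℂ Z18g) = 0 := by
    apply (basisMonomials (Fin 2) ℂ).ext
    intro m
    have h2 : (basisMonomials (Fin 2) ℂ) m = monomial m 1 := by rw [coe_basisMonomials]
    rw [LinearMap.comp_apply, h2, LinearMap.mulLeft_apply, LinearMap.zero_apply]
    rw [monomial_eq_pow]
    have hid : Z18g * ((X 0:P2) ^ (m 0) * X 1 ^ (m 1))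
        = X 0 ^ (m 0 + 3) * X 1 ^ (m 1) + 6 * (X 0 ^ (m 0 + 1) * X 1 ^ (m 1 + 5)) := by
      rw [Z18g]; ring
    rw [hid, map_add, ← smul_nat_eq 6, map_smul, Nmap_pow, Nmap_pow]
    exact relB (m 0) (m 1)
  have := congrFun (congrArg (fun f => f.toFun) h) p
  simpa using this

lemma Nmap_I {p : P2} (hp : p ∈ Z18I) : Nmap p = 0 := by
  rcases Ideal.mem_span_pair.mp hp with ⟨u, v, huv⟩
  rw [← huv, map_add, mul_comm u, mul_comm v, Nmap_mul_f, Nmap_mul_g, add_zero]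

lemma NM (v : Fin 18 → ℂ) : Nmap (Mmap v) = v := by
  have h : Nmap ∘ₗ Mmap = LinearMap.id := by
    apply (Pi.basisFun ℂ (Fin 18)).ext
    intro i
    rw [LinearMap.comp_apply, LinearMap.id_apply, Pi.basisFun_apply, Mmap_single]
    fin_cases i <;>
      simp [stdMono, Nmap_monomial, fs_apply0, fs_apply1, nf]
  have := congrFun (congrArg (fun f => f.toFun) h) v
  simpa using this

lemma surj_aux : ∀ a b : ℕ, πl (X 0 ^ a * X 1 ^ b) = πl (Mmap (nf a b))
  | 0, b => by
    by_cases h : b < 11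
    · rw [nf.eq_1, dif_pos h, Mmap_single, stdMono]
      rw [if_pos (by simpa using h)]
      rw [monomial_fs]
    · rw [nf.eq_1, dif_neg h, map_zero, map_zero]
      have hb : b = (b - 11) + 11 := by omega
      rw [hb, pow_zero, one_mul]
      exact e0 _
  | 1, b => by
    by_cases h : b < 6
    · rw [nf.eq_2, dif_pos h, Mmap_single, stdMono]
      rw [if_neg (by simp), if_pos (by simp; omega)]
      have : (((⟨11 + b, by omega⟩ : Fin 18) : ℕ)) - 11 = b := by simp
      rw [this, monomial_fs]
    · rw [nf.eq_2, dif_neg h, map_zero, map_zero]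
      have hb : b = (b - 6) + 6 := by omega
      rw [hb, pow_one]
      exact e1 _
  | 2, 0 => by
    rw [nf.eq_3, Mmap_single, stdMono]
    rw [if_neg (by decide), if_neg (by decide)]
    rw [monomial_fs]
  | 2, b+1 => by
    rw [nf.eq_4, map_smul, map_smul, ← surj_aux 0 (b+6), pow_zero, one_mul]
    exact e2 b
  | a+3, b => by
    rw [nf.eq_5, map_smul, map_smul, ← surj_aux (a+1) (b+5)]
    exact e3 a b
  termination_by a _ => a

lemma phi_bij : Function.Bijective (πl ∘ₗ Mmap) := by
  constructor
  · intro v w hvw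
    have h0 : (πl ∘ₗ Mmap) (v - w) = 0 := by rw [map_sub, sub_eq_zero]; exact hvw
    have hmem : Mmap (v - w) ∈ Z18I := by
      have : Ideal.Quotient.mk Z18I (Mmap (v - w)) = 0 := h0
      rwa [Ideal.Quotient.eq_zero_iff_mem] at this
    have := Nmap_I hmem
    rw [NM] at this
    exact sub_eq_zero.mp this
  · intro q
    obtain ⟨p, rfl⟩ := Ideal.Quotient.mk_surjective q
    have key : ∀ p : P2, ∃ v, (πl ∘ₗ Mmap) v = πl p := by
      intro p
      induction p using MvPolynomial.induction_on' with
      | monomial u c =>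
        refine ⟨c • nf (u 0) (u 1), ?_⟩
        have h1 : πl (monomial u c) = c • πl (monomial u 1) := by
          rw [show monomial u c = c • monomial u (1:ℂ) by
            rw [smul_monomial, smul_eq_mul, mul_one], map_smul]
        rw [LinearMap.comp_apply, map_smul, map_smul, h1, monomial_eq_pow, surj_aux]
      | add p q hp hq =>
        obtain ⟨v, hv⟩ := hp
        obtain ⟨w, hw⟩ := hq
        exact ⟨v + w, by rw [map_add, hv, hw, map_add]⟩
    exact key p

def z18Equiv : (Fin 18 → ℂ) ≃ₗ[ℂ] (P2 ⧸ Z18I) := LinearEquiv.ofBijective _ phi_bij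

end Z18Aux

theorem milnor_ring_Z18_dim :
    FiniteDimensional ℂ (MvPolynomial (Fin 2) ℂ ⧸
      Ideal.span ({(3 : MvPolynomial (Fin 2) ℂ) * X 0 ^ 2 * X 1 + X 1 ^ 6, X 0 ^ 3 + 6 * X 0 * X 1 ^ 5} : Set (MvPolynomial (Fin 2) ℂ))) ∧
    Module.finrank ℂ (MvPolynomial (Fin 2) ℂ ⧸
      Ideal.span ({(3 : MvPolynomial (Fin 2) ℂ) * X 0 ^ 2 * X 1 + X 1 ^ 6, X 0 ^ 3 + 6 * X 0 * X 1 ^ 5} : Set (MvPolynomial (Fin 2) ℂ))) = 18 := by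
  have h2 : Module.finrank ℂ (P2 ⧸ Z18I) = 18 := by
    rw [← z18Equiv.finrank_eq, Module.finrank_fin_fun]
  exact ⟨Module.Finite.equiv z18Equiv, h2⟩
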